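/- arXiv:2311.10435 — 3 statements merged into one kernel-verified Lean document; each statement's English description precedes it below -/
import Mathlib

section
/- Let ≺ be a strict partial order on [n] such that for all 1 ≤ i < j < k ≤ n, (i ≺ k implies i ≺ j or j ≺ k) and (k ≺ i implies j ≺ i or k ≺ j). Then the set of linear extensions of ≺ (viewed as permutations of [n]) forms an interval of the right weak order on Sₙ. -/
/-- The set of inversions of a permutation. -/
def winv {n : ℕ} (π : Equiv.Perm (Fin n)) : Set (Fin n × Fin n) :=
  {ab | ab.1 < ab.2 ∧ π⁻¹ ab.2 < π⁻¹ ab.1}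

/-- The right weak order: inclusion of inversion sets. -/
def wle {n : ℕ} (π σ : Equiv.Perm (Fin n)) : Prop := winv π ⊆ winv σ

/-- Linear extensions of a relation `r`: permutations whose one-line word lists
the elements in an order compatible with `r`. -/
def linExt {n : ℕ} (r : Fin n → Fin n → Prop) : Set (Equiv.Perm (Fin n)) :=
  {π | ∀ i j, r i j → π⁻¹ i < π⁻¹ j}

/-- A set of pairs closed under the two "betweenness" conditions is the
inversion set of some permutation. -/
lemma exists_perm_winv {n : ℕ} (I : Set (Fin n × Fin n))
    (hlt : ∀ a b : Fin n, (a, b) ∈ I → a < b)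
    (hC1 : ∀ a b c : Fin n, a < b → b < c → (a, b) ∈ I → (b, c) ∈ I → (a, c) ∈ I)
    (hC2 : ∀ a b c : Fin n, a < b → b < c → (a, c) ∈ I → (a, b) ∈ I ∨ (b, c) ∈ I) :
    ∃ π : Equiv.Perm (Fin n), winv π = I := by
  classical
  set s : Fin n → Fin n → Prop :=
    fun a b => (a < b ∧ (a, b) ∉ I) ∨ (b < a ∧ (b, a) ∈ I) with hs
  have hirr : ∀ a, ¬ s a a := by
    intro a h
    rcases h with ⟨h, _⟩ | ⟨h, _⟩ <;> exact lt_irrefl _ h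
  have htri : ∀ a b : Fin n, a ≠ b → s a b ∨ s b a := by
    intro a b hab
    rcases lt_trichotomy a b with h | h | h
    · by_cases hI : (a, b) ∈ I
      · exact Or.inr (Or.inr ⟨h, hI⟩)
      · exact Or.inl (Or.inl ⟨h, hI⟩)
    · exact absurd h hab
    · by_cases hI : (b, a) ∈ I
      · exact Or.inl (Or.inr ⟨h, hI⟩)
      · exact Or.inr (Or.inl ⟨h, hI⟩)
  have htrans : ∀ a b c : Fin n, s a b → s b c → s a c := by
    intro a b c hab hbc
    have hac : a ≠ c := by
      rintro rfl
      rcases hab with ⟨h1, h2⟩ | ⟨h1, h2⟩ <;> rcases hbc with ⟨h3, h4⟩ | ⟨h3, h4⟩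
      · exact absurd h3 (asymm h1)
      · exact h2 h4
      · exact h4 h2
      · exact absurd h3 (asymm h1)
    rcases hab with ⟨h1, h2⟩ | ⟨h1, h2⟩ <;> rcases hbc with ⟨h3, h4⟩ | ⟨h3, h4⟩
    · -- a<b<c, (a,b)∉I, (b,c)∉I
      refine Or.inl ⟨h1.trans h3, fun hI => ?_⟩
      rcases hC2 a b c h1 h3 hI with h | h
      exacts [h2 h, h4 h]
    · -- a<b, c<b, (a,b)∉I, (c,b)∈I
      rcases lt_trichotomy a c with h | h | h
      · exact Or.inl ⟨h, fun hI => h2 (hC1 a c b h h3 hI h4)⟩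
      · exact absurd h hac
      · refine Or.inr ⟨h, ?_⟩
        rcases hC2 c a b h h1 h4 with hh | hh
        · exact hh
        · exact absurd hh h2
    · -- b<a, b<c, (b,a)∈I, (b,c)∉I
      rcases lt_trichotomy a c with h | h | h
      · exact Or.inl ⟨h, fun hI => h4 (hC1 b a c h1 h h2 hI)⟩
      · exact absurd h hac
      · refine Or.inr ⟨h, ?_⟩
        rcases hC2 b c a h3 h h2 with hh | hh
        · exact absurd hh h4
        · exact hh
    · -- c<b<a, (b,a)∈I, (c,b)∈I
      exact Or.inr ⟨h3.trans h1, hC1 c b a h3 h1 h4 h2⟩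
  -- rank function
  let f : Fin n → Fin n := fun x =>
    ⟨(Finset.univ.filter (fun y => s y x)).card, by
      have hsub : Finset.univ.filter (fun y => s y x) ⊆ Finset.univ.erase x := by
        intro y hy
        simp only [Finset.mem_filter, Finset.mem_univ, true_and] at hy
        refine Finset.mem_erase.mpr ⟨?_, Finset.mem_univ y⟩
        rintro rfl; exact hirr _ hy
      calc (Finset.univ.filter (fun y => s y x)).card
          ≤ (Finset.univ.erase x).card := Finset.card_le_card hsub
        _ < Finset.univ.card := Finset.card_erase_lt_of_mem (Finset.mem_univ x)
        _ = n := Finset.card_fin n⟩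
  have hmono : ∀ a b : Fin n, s a b → f a < f b := by
    intro a b hab
    have hsub : Finset.univ.filter (fun y => s y a) ⊂ Finset.univ.filter (fun y => s y b) := by
      constructor
      · intro y hy
        simp only [Finset.mem_filter, Finset.mem_univ, true_and] at hy ⊢
        exact htrans y a b hy hab
      · intro hsub'
        have : a ∈ Finset.univ.filter (fun y => s y a) := by
          apply hsub'
          simp only [Finset.mem_filter, Finset.mem_univ, true_and]
          exact hab
        simp only [Finset.mem_filter, Finset.mem_univ, true_and] at this
        exact hirr a this
    exact Finset.card_lt_card hsub
  have hinj : Function.Injective f := by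
    intro a b hfab
    by_contra hne
    rcases htri a b hne with h | h
    · exact absurd hfab (ne_of_lt (hmono a b h))
    · exact absurd hfab.symm (ne_of_lt (hmono b a h))
  have hbij : Function.Bijective f := (Finite.injective_iff_bijective).mp hinj
  refine ⟨(Equiv.ofBijective f hbij).symm, ?_⟩
  have hinv : ((Equiv.ofBijective f hbij).symm : Equiv.Perm (Fin n))⁻¹ =
      Equiv.ofBijective f hbij := rfl
  ext ⟨a, b⟩
  simp only [winv, Set.mem_setOf_eq, hinv, Equiv.ofBijective_apply]
  constructor
  · rintro ⟨hab, hf⟩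
    by_contra hI
    have : s a b := Or.inl ⟨hab, hI⟩
    exact absurd hf (asymm (hmono a b this))
  · intro hI
    have hab := hlt a b hI
    exact ⟨hab, hmono b a (Or.inr ⟨hab, hI⟩)⟩

/-- Björner–Wachs: if a strict partial order ≺ on [n] satisfies the
interval condition, then its set of linear extensions is a weak order interval. -/
theorem stmt3 {n : ℕ} (r : Fin n → Fin n → Prop) [IsStrictOrder (Fin n) r]
    (h₁ : ∀ i j k : Fin n, i < j → j < k → r i k → r i j ∨ r j k)
    (h₂ : ∀ i j k : Fin n, i < j → j < k → r k i → r j i ∨ r k j) :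
    ∃ πbot πtop : Equiv.Perm (Fin n),
      linExt r = {ρ | wle πbot ρ ∧ wle ρ πtop} := by
  classical
  have hirr : ∀ a : Fin n, ¬ r a a := fun a => irrefl a
  have htr : ∀ a b c : Fin n, r a b → r b c → r a c := fun a b c h h' => _root_.trans h h'
  -- bottom: forced inversions
  obtain ⟨πbot, hbot⟩ := exists_perm_winv (n := n) {ab | ab.1 < ab.2 ∧ r ab.2 ab.1}
    (fun a b h => h.1)
    (by rintro a b c hab hbc ⟨-, h1⟩ ⟨-, h2⟩; exact ⟨hab.trans hbc, htr c b a h2 h1⟩)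
    (by
      rintro a b c hab hbc ⟨-, h1⟩
      rcases h₂ a b c hab hbc h1 with h | h
      · exact Or.inl ⟨hab, h⟩
      · exact Or.inr ⟨hbc, h⟩)
  -- top: all pairs except forbidden inversions
  obtain ⟨πtop, htop⟩ := exists_perm_winv (n := n) {ab | ab.1 < ab.2 ∧ ¬ r ab.1 ab.2}
    (fun a b h => h.1)
    (by
      rintro a b c hab hbc ⟨-, h1⟩ ⟨-, h2⟩
      refine ⟨hab.trans hbc, fun hac => ?_⟩
      rcases h₁ a b c hab hbc hac with h | h
      exacts [h1 h, h2 h])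
    (by
      rintro a b c hab hbc ⟨-, h1⟩
      by_cases h : r a b
      · exact Or.inr ⟨hbc, fun h' => h1 (htr a b c h h')⟩
      · exact Or.inl ⟨hab, h⟩)
  refine ⟨πbot, πtop, ?_⟩
  ext ρ
  simp only [linExt, wle, Set.mem_setOf_eq, hbot, htop]
  constructor
  · intro hρ
    constructor
    · rintro ⟨a, b⟩ ⟨hab, hr⟩
      exact ⟨hab, hρ b a hr⟩
    · rintro ⟨a, b⟩ ⟨hab, hinv⟩
      exact ⟨hab, fun hr => absurd (hρ a b hr) (asymm hinv)⟩
  · rintro ⟨hB, hT⟩ i j hij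
    have hne : i ≠ j := fun h => hirr i (h ▸ hij)
    rcases lt_trichotomy i j with h | h | h
    · -- (i,j) is not an inversion of ρ
      by_contra hle
      have hinv : (i, j) ∈ winv ρ := by
        refine ⟨h, ?_⟩
        rcases lt_or_eq_of_le (not_lt.mp hle) with h' | h'
        · exact h'
        · exact absurd (ρ⁻¹.injective h') (fun hh => hne hh.symm)
      exact (hT hinv).2 hij
    · exact absurd h hne
    · exact (hB (a := (j, i)) ⟨h, hij⟩).2
end

section
/- Let ≺ be a strict partial order on [n] satisfying: for all i < j < k, i ≺ k implies (i ≺ j or j ≺ k), and k ≺ i implies (j ≺ i or k ≺ j). Then the minimum (in weak order) of the set of linear extensions of ≺ has as its inversion set exactly the pairs (i,j) with i < j and j ≺ i, and the maximum has as its noninversion set exactly the pairs (i,j) with i < j and i ≺ j. -/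
/-- The set of noninversions of a permutation. -/
def wninv {n : ℕ} (π : Equiv.Perm (Fin n)) : Set (Fin n × Fin n) :=
  {ab | ab.1 < ab.2 ∧ π⁻¹ ab.1 < π⁻¹ ab.2}

/-- Any strict total order on `Fin n` is realized by a permutation. -/
lemma exists_perm_of_sto {n : ℕ} (s : Fin n → Fin n → Prop)
    (hirr : ∀ i, ¬ s i i) (htr : ∀ {i j k}, s i j → s j k → s i k)
    (htri : ∀ i j, i ≠ j → s i j ∨ s j i) :
    ∃ π : Equiv.Perm (Fin n), ∀ i j, π⁻¹ i < π⁻¹ j ↔ s i j := by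
  classical
  let f : Fin n → Fin n := fun i =>
    ⟨(Finset.univ.filter (fun j => s j i)).card, by
      have h : (Finset.univ.filter (fun j => s j i)).card < (Finset.univ : Finset (Fin n)).card := by
        apply Finset.card_lt_card
        refine ⟨Finset.filter_subset _ _, fun hsub => ?_⟩
        have := hsub (Finset.mem_univ i)
        simp [hirr i] at this
      simpa using h⟩
  have hmono : ∀ {i j}, s i j → f i < f j := by
    intro i j hij
    have hsub : (Finset.univ.filter (fun k => s k i)) ⊂
        (Finset.univ.filter (fun k => s k j)) := by
      constructor
      · intro k hk
        simp only [Finset.mem_filter, Finset.mem_univ, true_and] at hk ⊢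
        exact htr hk hij
      · intro hsub
        have := hsub (by simp [hij] : i ∈ Finset.univ.filter (fun k => s k j))
        simp [hirr i] at this
    exact Finset.card_lt_card hsub
  have hinj : Function.Injective f := by
    intro i j hij
    by_contra hne
    rcases htri i j hne with h | h
    · exact absurd hij (Fin.ne_of_lt (hmono h))
    · exact absurd hij.symm (Fin.ne_of_lt (hmono h))
  let e := Equiv.ofBijective f (Finite.injective_iff_bijective.1 hinj)
  have hinv : ∀ i, (e.symm)⁻¹ i = f i := fun i => rfl
  refine ⟨e.symm, fun i j => ?_⟩
  rw [hinv, hinv]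
  constructor
  · intro h
    have hne : i ≠ j := fun hij => by subst hij; exact lt_irrefl _ h
    rcases htri i j hne with h' | h'
    · exact h'
    · exact absurd (hmono h') (not_lt.2 (le_of_lt h))
  · exact hmono

/-- Transitivity of the tie-breaking order, from the interval condition. -/
lemma sto_trans {n : ℕ} (r : Fin n → Fin n → Prop)
    (rirr : ∀ i, ¬ r i i) (rtr : ∀ {i j k : Fin n}, r i j → r j k → r i k)
    (lt : Fin n → Fin n → Prop)
    (lt_tri : ∀ i j : Fin n, i ≠ j → lt i j ∨ lt j i)
    (lt_tr : ∀ {i j k : Fin n}, lt i j → lt j k → lt i k)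
    (lt_asym : ∀ {i j : Fin n}, lt i j → ¬ lt j i)
    (H2 : ∀ i j k : Fin n, lt i j → lt j k → r k i → r j i ∨ r k j)
    {i j k : Fin n}
    (hij : r i j ∨ (¬ r j i ∧ ¬ r i j ∧ lt i j))
    (hjk : r j k ∨ (¬ r k j ∧ ¬ r j k ∧ lt j k)) :
    r i k ∨ (¬ r k i ∧ ¬ r i k ∧ lt i k) := by
  by_cases hik : r i k
  · exact Or.inl hik
  rcases hij with hij | ⟨hji', hij', hlt_ij⟩ <;>
    rcases hjk with hjk | ⟨hkj', hjk', hlt_jk⟩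
  · exact Or.inl (rtr hij hjk)
  · -- r i j, ties j k with lt j k
    right
    have hki : ¬ r k i := fun h => hkj' (rtr h hij)
    refine ⟨hki, hik, ?_⟩
    by_contra hlt_ik
    rcases eq_or_ne i k with hieq | hne
    · exact hkj' (hieq ▸ hij)
    · rcases lt_tri i k hne with h | h
      · exact hlt_ik h
      · rcases H2 j k i hlt_jk h hij with h' | h'
        · exact hkj' h'
        · exact hik h'
  · -- ties i j with lt i j, r j k
    right
    have hki : ¬ r k i := fun h => hji' (rtr hjk h)
    refine ⟨hki, hik, ?_⟩
    by_contra hlt_ik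
    rcases eq_or_ne i k with hieq | hne
    · exact hji' (hieq ▸ hjk)
    · rcases lt_tri i k hne with h | h
      · exact hlt_ik h
      · rcases H2 k i j h hlt_ij hjk with h' | h'
        · exact hik h'
        · exact hji' h'
  · -- ties both
    right
    have hki : ¬ r k i := fun h => by
      rcases H2 i j k hlt_ij hlt_jk h with h' | h'
      · exact hji' h'
      · exact hkj' h'
    exact ⟨hki, hik, lt_tr hlt_ij hlt_jk⟩

/-- Under the Björner–Wachs interval condition, the minimum of the set of linear
extensions of ≺ has inversion set `{(i,j) | i < j ∧ j ≺ i}`, and the maximum has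
noninversion set `{(i,j) | i < j ∧ i ≺ j}`. -/
theorem stmt4 {n : ℕ} (r : Fin n → Fin n → Prop) [IsStrictOrder (Fin n) r]
    (h₁ : ∀ i j k : Fin n, i < j → j < k → r i k → r i j ∨ r j k)
    (h₂ : ∀ i j k : Fin n, i < j → j < k → r k i → r j i ∨ r k j) :
    ∃ πbot ∈ linExt r, ∃ πtop ∈ linExt r,
      (∀ ρ ∈ linExt r, wle πbot ρ ∧ wle ρ πtop) ∧
      winv πbot = {ij | ij.1 < ij.2 ∧ r ij.2 ij.1} ∧
      wninv πtop = {ij | ij.1 < ij.2 ∧ r ij.1 ij.2} := by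
  have rirr : ∀ i : Fin n, ¬ r i i := fun i => irrefl i
  have rtr : ∀ {i j k : Fin n}, r i j → r j k → r i k := fun h h' => _root_.trans h h'
  -- the two tie-breaking strict total orders
  set sb : Fin n → Fin n → Prop :=
    fun i j => r i j ∨ (¬ r j i ∧ ¬ r i j ∧ i < j) with hsb
  set st : Fin n → Fin n → Prop :=
    fun i j => r i j ∨ (¬ r j i ∧ ¬ r i j ∧ j < i) with hst
  have sb_irr : ∀ i, ¬ sb i i := by
    intro i h; rcases h with h | ⟨_, _, h⟩; exacts [rirr i h, lt_irrefl _ h]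
  have st_irr : ∀ i, ¬ st i i := by
    intro i h; rcases h with h | ⟨_, _, h⟩; exacts [rirr i h, lt_irrefl _ h]
  have sb_tri : ∀ i j, i ≠ j → sb i j ∨ sb j i := by
    intro i j hne
    by_cases hij : r i j
    · exact Or.inl (Or.inl hij)
    by_cases hji : r j i
    · exact Or.inr (Or.inl hji)
    rcases lt_or_gt_of_ne hne with h | h
    · exact Or.inl (Or.inr ⟨hji, hij, h⟩)
    · exact Or.inr (Or.inr ⟨hij, hji, h⟩)
  have st_tri : ∀ i j, i ≠ j → st i j ∨ st j i := by
    intro i j hne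
    by_cases hij : r i j
    · exact Or.inl (Or.inl hij)
    by_cases hji : r j i
    · exact Or.inr (Or.inl hji)
    rcases lt_or_gt_of_ne hne with h | h
    · exact Or.inr (Or.inr ⟨hij, hji, h⟩)
    · exact Or.inl (Or.inr ⟨hji, hij, h⟩)
  have sb_tr : ∀ {i j k}, sb i j → sb j k → sb i k := by
    intro i j k hij hjk
    exact sto_trans r rirr (fun h h' => rtr h h') (· < ·)
      (fun a b h => lt_or_gt_of_ne h) (fun h h' => lt_trans h h')
      (fun h => not_lt.2 (le_of_lt h)) h₂ hij hjk
  have st_tr : ∀ {i j k}, st i j → st j k → st i k := by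
    intro i j k hij hjk
    exact sto_trans r rirr (fun h h' => rtr h h') (fun a b => b < a)
      (fun a b h => (lt_or_gt_of_ne h).symm) (fun h h' => lt_trans h' h)
      (fun h => not_lt.2 (le_of_lt h))
      (fun a b c hab hbc hr => (h₁ c b a hbc hab hr).symm) hij hjk
  obtain ⟨πbot, hbot⟩ := exists_perm_of_sto sb sb_irr sb_tr sb_tri
  obtain ⟨πtop, htop⟩ := exists_perm_of_sto st st_irr st_tr st_tri
  have hbot_ext : πbot ∈ linExt r := fun i j hij => (hbot i j).2 (Or.inl hij)
  have htop_ext : πtop ∈ linExt r := fun i j hij => (htop i j).2 (Or.inl hij)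
  refine ⟨πbot, hbot_ext, πtop, htop_ext, ?_, ?_, ?_⟩
  · intro ρ hρ
    constructor
    · intro ⟨i, j⟩ hij
      obtain ⟨hlt, hinv⟩ := hij
      have := (hbot j i).1 hinv
      rcases this with h | ⟨_, _, h⟩
      · exact ⟨hlt, hρ j i h⟩
      · exact absurd hlt (not_lt.2 (le_of_lt h))
    · intro ⟨i, j⟩ hij
      obtain ⟨hlt, hinv⟩ := hij
      refine ⟨hlt, (htop j i).2 ?_⟩
      by_cases hji : r j i
      · exact Or.inl hji
      by_cases hij' : r i j
      · exact absurd (hρ i j hij') (not_lt.2 (le_of_lt hinv))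
      · exact Or.inr ⟨hij', hji, hlt⟩
  · ext ⟨i, j⟩
    simp only [winv, Set.mem_setOf_eq]
    constructor
    · rintro ⟨hlt, hinv⟩
      rcases (hbot j i).1 hinv with h | ⟨_, _, h⟩
      · exact ⟨hlt, h⟩
      · exact absurd hlt (not_lt.2 (le_of_lt h))
    · rintro ⟨hlt, hr⟩
      exact ⟨hlt, (hbot j i).2 (Or.inl hr)⟩
  · ext ⟨i, j⟩
    simp only [wninv, Set.mem_setOf_eq]
    constructor
    · rintro ⟨hlt, hinv⟩
      rcases (htop i j).1 hinv with h | ⟨_, _, h⟩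
      · exact ⟨hlt, h⟩
      · exact absurd hlt (not_lt.2 (le_of_lt h))
    · rintro ⟨hlt, hr⟩
      exact ⟨hlt, (htop i j).2 (Or.inl hr)⟩
end

section
/- Let L be a finite lattice and ≡ a lattice congruence on L. For two distinct congruence classes C₁, C₂, the class C₂ covers C₁ in the quotient lattice if and only if there exist x₁ ∈ C₁ and x₂ ∈ C₂ such that x₂ covers x₁ in L. -/
/-- `r` is a lattice congruence. -/
def IsLatticeCongruence {L : Type*} [Lattice L] (r : L → L → Prop) : Prop :=
  Equivalence r ∧
    ∀ x x' y y' : L, r x x' → r y y' → r (x ⊓ y) (x' ⊓ y') ∧ r (x ⊔ y) (x' ⊔ y')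

/-- The quotient order on congruence classes. -/
def qle {L : Type*} [Lattice L] (s : Setoid L) (C C' : Quotient s) : Prop :=
  ∃ x x' : L, Quotient.mk s x = C ∧ Quotient.mk s x' = C' ∧ x ≤ x'

/-- `C'` covers `C` in the quotient order. -/
def qCovers {L : Type*} [Lattice L] (s : Setoid L) (C C' : Quotient s) : Prop :=
  qle s C C' ∧ C ≠ C' ∧ ∀ D, qle s C D → qle s D C' → D = C ∨ D = C'

private lemma key_lemma {L : Type*} [Lattice L] (s : Setoid L)
    (hcong : IsLatticeCongruence s.r) {C C' : Quotient s}
    (h : qle s C C') {a b : L} (ha : Quotient.mk s a = C) (hb : Quotient.mk s b = C') :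
    Quotient.mk s (a ⊓ b) = C ∧ Quotient.mk s (a ⊔ b) = C' := by
  obtain ⟨x, x', hx, hx', hle⟩ := h
  have hax : s.r a x := Quotient.exact (ha.trans hx.symm)
  have hbx : s.r b x' := Quotient.exact (hb.trans hx'.symm)
  have h2 := hcong.2 a x b x' hax hbx
  constructor
  · have h3 := h2.1
    rw [inf_eq_left.mpr hle] at h3
    exact (Quotient.sound h3).trans hx
  · have h3 := h2.2
    rw [sup_eq_right.mpr hle] at h3
    exact (Quotient.sound h3).trans hx'

/-- For a lattice congruence on a finite lattice, `C₂` covers `C₁` in the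
quotient lattice iff some element of `C₂` covers some element of `C₁` in `L`. -/
theorem stmt7 {L : Type*} [Lattice L] [Fintype L] (s : Setoid L)
    (hcong : IsLatticeCongruence s.r)
    (C₁ C₂ : Quotient s) (hne : C₁ ≠ C₂) :
    qCovers s C₁ C₂ ↔
      ∃ x₁ x₂ : L, Quotient.mk s x₁ = C₁ ∧ Quotient.mk s x₂ = C₂ ∧ x₁ ⋖ x₂ := by
  classical
  constructor
  · rintro ⟨hle, -, hcov⟩
    obtain ⟨a₀, b, ha₀, hb, hab⟩ := hle
    obtain ⟨a, hamem, hamax⟩ := Finset.exists_maximal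
      (s := Finset.univ.filter fun z => Quotient.mk s z = C₁ ∧ z ≤ b)
      ⟨a₀, by simp [ha₀, hab]⟩
    simp only [Finset.mem_filter, Finset.mem_univ, true_and] at hamem
    obtain ⟨haC, hab'⟩ := hamem
    have hlt : a < b := lt_of_le_of_ne hab' (by
      rintro rfl
      exact hne (haC.symm.trans hb))
    obtain ⟨z, hzmem, hzmin⟩ := Finset.exists_minimal
      (s := Finset.univ.filter fun z => a < z ∧ z ≤ b) ⟨b, by simp [hlt]⟩
    simp only [Finset.mem_filter, Finset.mem_univ, true_and] at hzmem
    obtain ⟨haz, hzb⟩ := hzmem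
    have hcovz : a ⋖ z := by
      refine ⟨haz, fun c hac hcz => ?_⟩
      exact (not_lt_of_ge (hzmin (by simp [hac, hcz.le.trans hzb]) hcz.le)) hcz
    rcases hcov (Quotient.mk s z) ⟨a, z, haC, rfl, haz.le⟩ ⟨z, b, rfl, hb, hzb⟩ with hzC | hzC
    · exact absurd haz (not_lt_of_ge (hamax (by simp [hzC, hzb]) haz.le))
    · exact ⟨a, z, haC, hzC, hcovz⟩
  · rintro ⟨x₁, x₂, h1, h2, hcov⟩
    refine ⟨⟨x₁, x₂, h1, h2, hcov.le⟩, hne, ?_⟩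
    intro D hCD hDC
    obtain ⟨d, hd⟩ := Quotient.exists_rep D
    have hsup : Quotient.mk s (x₁ ⊔ d) = D := (key_lemma s hcong hCD h1 hd).2
    have hy : Quotient.mk s ((x₁ ⊔ d) ⊓ x₂) = D := (key_lemma s hcong hDC hsup h2).1
    have hx1y : x₁ ≤ (x₁ ⊔ d) ⊓ x₂ := le_inf le_sup_left hcov.le
    have hyx2 : (x₁ ⊔ d) ⊓ x₂ ≤ x₂ := inf_le_right
    rcases hcov.eq_or_eq hx1y hyx2 with h | h
    · left; rw [← hy, h, h1]
    · right; rw [← hy, h, h2]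
end
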